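/- For Markov kernels (conditional models) Q_{|z} with C¹ densities f_{Q_{|z}}, a C² real kernel l on 𝒴, and a real kernel k on 𝒵, the function k_{Q}((z,y),(z',y')) = k(z,z')·[ l(y,y') s_{Q_{|z}}(y)ᵀ s_{Q_{|z'}}(y') + s_{Q_{|z}}(y)ᵀ ∇_{y'} l(y,y') + s_{Q_{|z'}}(y')ᵀ ∇_y l(y,y') + ∑_{i} ∂²l(y,y')/∂y_i∂y'_i ] is a positive definite kernel on 𝒵 × 𝒴. -/

import Mathlib

open Filter Topology Set


open MeasureTheory

noncomputable section

/-- Gradient of the kernel `l` in its first argument. -/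
def gradFst {dy : ℕ} (l : EuclideanSpace ℝ (Fin dy) → EuclideanSpace ℝ (Fin dy) → ℝ)
    (y y' : EuclideanSpace ℝ (Fin dy)) : EuclideanSpace ℝ (Fin dy) :=
  gradient (fun u => l u y') y

/-- Gradient of the kernel `l` in its second argument. -/
def gradSnd {dy : ℕ} (l : EuclideanSpace ℝ (Fin dy) → EuclideanSpace ℝ (Fin dy) → ℝ)
    (y y' : EuclideanSpace ℝ (Fin dy)) : EuclideanSpace ℝ (Fin dy) :=
  gradient (fun v => l y v) y'

/-- The trace of mixed second partials `∑ᵢ ∂²l(y,y')/∂yᵢ∂y'ᵢ`. -/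
def crossDeriv {dy : ℕ} (l : EuclideanSpace ℝ (Fin dy) → EuclideanSpace ℝ (Fin dy) → ℝ)
    (y y' : EuclideanSpace ℝ (Fin dy)) : ℝ :=
  ∑ i, fderiv ℝ (fun u => fderiv ℝ (fun v => l u v) y' (EuclideanSpace.single i 1)) y
    (EuclideanSpace.single i 1)

namespace SteinAux

variable {dy : ℕ}

abbrev E (dy : ℕ) := EuclideanSpace ℝ (Fin dy)
abbrev L (l : E dy → E dy → ℝ) : E dy × E dy → ℝ := fun p => l p.1 p.2

variable (l : E dy → E dy → ℝ)

lemma diffL (hl : ContDiff ℝ 2 (L l)) : Differentiable ℝ (L l) :=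
  hl.differentiable two_ne_zero

lemma diffD (hl : ContDiff ℝ 2 (L l)) : Differentiable ℝ (fderiv ℝ (L l)) :=
  (hl.fderiv_right (m := 1) (by norm_num)).differentiable one_ne_zero

lemma hasFDerivAt_snd (hl : ContDiff ℝ 2 (L l)) (y y' : E dy) :
    HasFDerivAt (fun v => l y v)
      ((fderiv ℝ (L l) (y, y')).comp (ContinuousLinearMap.inr ℝ (E dy) (E dy))) y' :=
  (diffL l hl (y, y')).hasFDerivAt.comp y' (hasFDerivAt_prodMk_right y y')

lemma fderiv_snd (hl : ContDiff ℝ 2 (L l)) (y y' w : E dy) :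
    fderiv ℝ (fun v => l y v) y' w = fderiv ℝ (L l) (y, y') (0, w) := by
  rw [(hasFDerivAt_snd l hl y y').fderiv]; rfl

lemma hasFDerivAt_fst (hl : ContDiff ℝ 2 (L l)) (y y' : E dy) :
    HasFDerivAt (fun u => l u y')
      ((fderiv ℝ (L l) (y, y')).comp (ContinuousLinearMap.inl ℝ (E dy) (E dy))) y :=
  HasFDerivAt.comp (g := L l) y (diffL l hl (y, y')).hasFDerivAt (hasFDerivAt_prodMk_left (𝕜 := ℝ) y y')

lemma fderiv_fst (hl : ContDiff ℝ 2 (L l)) (y y' w : E dy) :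
    fderiv ℝ (fun u => l u y') y w = fderiv ℝ (L l) (y, y') (w, 0) := by
  rw [(hasFDerivAt_fst l hl y y').fderiv]; rfl

lemma inner_gradSnd (hl : ContDiff ℝ 2 (L l)) (y y' x : E dy) :
    (inner ℝ x (gradSnd l y y') : ℝ) = fderiv ℝ (L l) (y, y') (0, x) := by
  have h : gradSnd l y y'
      = (InnerProductSpace.toDual ℝ (E dy)).symm (fderiv ℝ (fun v => l y v) y') := rfl
  rw [h, real_inner_comm, InnerProductSpace.toDual_symm_apply, fderiv_snd l hl]

lemma inner_gradFst (hl : ContDiff ℝ 2 (L l)) (y y' x : E dy) :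
    (inner ℝ x (gradFst l y y') : ℝ) = fderiv ℝ (L l) (y, y') (x, 0) := by
  have h : gradFst l y y'
      = (InnerProductSpace.toDual ℝ (E dy)).symm (fderiv ℝ (fun u => l u y') y) := rfl
  rw [h, real_inner_comm, InnerProductSpace.toDual_symm_apply, fderiv_fst l hl]


lemma fderiv_clm_const (hl : ContDiff ℝ 2 (L l)) (p : E dy × E dy) (v w : E dy × E dy) :
    fderiv ℝ (fun q => fderiv ℝ (L l) q w) p v = fderiv ℝ (fderiv ℝ (L l)) p v w := by
  rw [fderiv_clm_apply (diffD l hl p) (differentiableAt_const w)]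
  simp

lemma crossDeriv_eq (hl : ContDiff ℝ 2 (L l)) (y y' : E dy) :
    crossDeriv l y y' = ∑ i, fderiv ℝ (fderiv ℝ (L l)) (y, y')
      (EuclideanSpace.single i 1, 0) (0, EuclideanSpace.single i 1) := by
  unfold crossDeriv
  refine Finset.sum_congr rfl fun i _ => ?_
  set e := (EuclideanSpace.single i 1 : E dy) with he
  have h1 : (fun u => fderiv ℝ (fun v => l u v) y' e)
      = (fun q => fderiv ℝ (L l) q ((0 : E dy), e)) ∘ (fun u : E dy => (u, y')) := by
    funext u; exact fderiv_snd l hl u y' e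
  rw [h1, fderiv_comp _ ((diffD l hl _).clm_apply (differentiableAt_const _))
    (hasFDerivAt_prodMk_left y y').differentiableAt]
  rw [(hasFDerivAt_prodMk_left y y').fderiv]
  simp only [ContinuousLinearMap.comp_apply, ContinuousLinearMap.inl_apply]
  exact fderiv_clm_const l hl (y, y') (e, 0) (0, e)

lemma hasDerivAt_line (x x' e e' : E dy) (t : ℝ) :
    HasDerivAt (fun t : ℝ => ((x + t • e, x' + t • e') : E dy × E dy)) (e, e') t := by
  have h1 : HasDerivAt (fun t : ℝ => x + t • e) e t := by
    simpa using ((hasDerivAt_id t).smul_const e).const_add x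
  have h2 : HasDerivAt (fun t : ℝ => x' + t • e') e' t := by
    simpa using ((hasDerivAt_id t).smul_const e').const_add x'
  exact h1.prodMk h2

lemma hasDerivAt_comp_line (hl : ContDiff ℝ 2 (L l)) (x x' e e' : E dy) (t : ℝ) :
    HasDerivAt (fun t : ℝ => l (x + t • e) (x' + t • e'))
      (fderiv ℝ (L l) (x + t • e, x' + t • e') (e, e')) t :=
  (diffL l hl _).hasFDerivAt.comp_hasDerivAt t (hasDerivAt_line x x' e e' t)

lemma tendsto_slope_line (hl : ContDiff ℝ 2 (L l)) (x x' e e' : E dy) :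
    Tendsto (fun t : ℝ => (l (x + t • e) (x' + t • e') - l x x') / t) (𝓝[≠] (0:ℝ))
      (𝓝 (fderiv ℝ (L l) (x, x') (e, e'))) := by
  have h := hasDerivAt_comp_line l hl x x' e e' 0
  simp only [zero_smul, add_zero] at h
  have h2 := hasDerivAt_iff_tendsto_slope.mp h
  refine Tendsto.congr (fun t => ?_) h2
  rw [slope_def_field]
  simp


lemma tendsto_crossQuot (hl : ContDiff ℝ 2 (L l)) (x x' e : E dy) :
    Tendsto (fun t : ℝ =>
        (l (x + t • e) (x' + t • e) - l (x + t • e) x' - l x (x' + t • e) + l x x') / t ^ 2)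
      (𝓝[>] (0:ℝ)) (𝓝 (fderiv ℝ (fderiv ℝ (L l)) (x, x') (e, 0) (0, e))) := by
  set D := fderiv ℝ (L l) with hDdef
  set H := fderiv ℝ (fderiv ℝ (L l)) (x, x') with hHdef
  set F : ℝ → ℝ := fun t =>
    l (x + t • e) (x' + t • e) - l (x + t • e) x' - l x (x' + t • e) + l x x' with hFdef
  set F' : ℝ → ℝ := fun t =>
    D (x + t • e, x' + t • e) (e, e) - D (x + t • e, x') (e, 0) - D (x, x' + t • e) (0, e)
    with hF'def
  have hprod : ((e, e) : E dy × E dy) = (e, 0) + (0, e) := by simp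
  have hFd : ∀ t, HasDerivAt F (F' t) t := by
    intro t
    have h1 := hasDerivAt_comp_line l hl x x' e e t
    have h2 : HasDerivAt (fun t : ℝ => l (x + t • e) x') (D (x + t • e, x') (e, 0)) t := by
      simpa using hasDerivAt_comp_line l hl x x' e 0 t
    have h3 : HasDerivAt (fun t : ℝ => l x (x' + t • e)) (D (x, x' + t • e) (0, e)) t := by
      simpa using hasDerivAt_comp_line l hl x x' 0 e t
    exact ((h1.sub h2).sub h3).add_const (l x x')
  have hF0 : F 0 = 0 := by simp [hFdef]
  have hF'0 : F' 0 = 0 := by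
    simp only [hF'def, zero_smul, add_zero]
    rw [hprod, map_add]; ring
  have hF'd : HasDerivAt F' (H (e, e) (e, e) - H (e, 0) (e, 0) - H (0, e) (0, e)) 0 := by
    have key : ∀ v : E dy × E dy, HasDerivAt
        (fun t : ℝ => D (x + t • v.1, x' + t • v.2) v) (H v v) 0 := by
      intro v
      have hc := hasDerivAt_line x x' v.1 v.2 0
      have h1 : HasDerivAt (fun t : ℝ => D (x + t • v.1, x' + t • v.2)) (H v) 0 := by
        have := (diffD l hl _).hasFDerivAt.comp_hasDerivAt 0 hc
        simp only [zero_smul, add_zero, Prod.mk.eta] at this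
        exact this
      have := h1.clm_apply (hasDerivAt_const 0 v)
      simpa using this
    have h1 := key (e, e)
    have h2 : HasDerivAt (fun t : ℝ => D (x + t • e, x') (e, 0)) (H (e, 0) (e, 0)) 0 := by
      simpa using key (e, 0)
    have h3 : HasDerivAt (fun t : ℝ => D (x, x' + t • e) (0, e)) (H (0, e) (0, e)) 0 := by
      simpa using key (0, e)
    exact (h1.sub h2).sub h3
  have hsym : H (0, e) (e, 0) = H (e, 0) (0, e) :=
    second_derivative_symmetric (f := L l) (fun q => (diffL l hl q).hasFDerivAt)
      (diffD l hl (x, x')).hasFDerivAt (0, e) (e, 0)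
  have hG : H (e, e) (e, e) - H (e, 0) (e, 0) - H (0, e) (0, e) = 2 * H (e, 0) (0, e) := by
    rw [hprod]
    simp only [map_add, ContinuousLinearMap.add_apply]
    linarith [hsym]
  have htop : Tendsto (fun t => F' t / (2 * t)) (𝓝[>] (0:ℝ)) (𝓝 (H (e, 0) (0, e))) := by
    have hs := hasDerivAt_iff_tendsto_slope.mp hF'd
    have hs2 := (hs.mono_left (nhdsWithin_mono (0:ℝ)
      (fun t (ht : t ∈ Set.Ioi (0:ℝ)) => ne_of_gt ht))).const_mul (1/2 : ℝ)
    rw [hG] at hs2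
    have hval : (1/2 : ℝ) * (2 * H (e, 0) (0, e)) = H (e, 0) (0, e) := by ring
    rw [hval] at hs2
    refine Tendsto.congr (fun t => ?_) hs2
    rw [slope_def_field, hF'0, sub_zero, sub_zero]
    rcases eq_or_ne t 0 with h | h
    · simp [h]
    · field_simp
      try ring
  have hfa : Tendsto F (𝓝[>] (0:ℝ)) (𝓝 0) := by
    have := (hFd 0).continuousAt.tendsto.mono_left (nhdsWithin_le_nhds (s := Set.Ioi (0:ℝ)))
    rwa [hF0] at this
  have hga : Tendsto (fun t : ℝ => t ^ 2) (𝓝[>] (0:ℝ)) (𝓝 0) := by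
    have := ((continuous_pow 2).tendsto (0:ℝ)).mono_left (nhdsWithin_le_nhds (s := Set.Ioi 0))
    simpa using this
  have hgg' : ∀ t : ℝ, HasDerivAt (fun t : ℝ => t ^ 2) (2 * t) t := by
    intro t; simpa using hasDerivAt_pow 2 t
  have hg' : ∀ᶠ t in 𝓝[>] (0:ℝ), 2 * t ≠ 0 := by
    filter_upwards [self_mem_nhdsWithin] with t ht
    have ht' : (0:ℝ) < t := ht
    exact ne_of_gt (by linarith)
  exact HasDerivAt.lhopital_zero_nhdsGT (Eventually.of_forall hFd)
    (Eventually.of_forall hgg') hg' hfa hga htop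


lemma fderiv_swap (hl : ContDiff ℝ 2 (L l)) (hsymm : ∀ y y', l y y' = l y' y)
    (q : E dy × E dy) (w : E dy × E dy) :
    fderiv ℝ (L l) q w = fderiv ℝ (L l) (q.2, q.1) (w.2, w.1) := by
  set σ : (E dy × E dy) ≃L[ℝ] (E dy × E dy) := ContinuousLinearEquiv.prodComm ℝ (E dy) (E dy)
    with hσ
  have hfun : (L l) = (L l) ∘ σ := by
    funext p; exact (hsymm p.2 p.1).symm
  have h1 : fderiv ℝ (L l) q = fderiv ℝ ((L l) ∘ σ) q := by rw [← hfun]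
  rw [h1, fderiv_comp q (diffL l hl _) σ.differentiableAt, σ.fderiv]
  rfl

lemma crossDeriv_symm (hl : ContDiff ℝ 2 (L l)) (hsymm : ∀ y y', l y y' = l y' y)
    (y y' : E dy) : crossDeriv l y y' = crossDeriv l y' y := by
  rw [crossDeriv_eq l hl, crossDeriv_eq l hl]
  refine Finset.sum_congr rfl fun i _ => ?_
  set e := (EuclideanSpace.single i 1 : E dy) with he
  set σ : (E dy × E dy) ≃L[ℝ] (E dy × E dy) := ContinuousLinearEquiv.prodComm ℝ (E dy) (E dy)
    with hσ
  -- LHS entry at (y,y'): H_(y,y') (e,0) (0,e); RHS: H_(y',y) (e,0) (0,e)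
  have hD : ∀ p : E dy × E dy, DifferentiableAt ℝ (fun q => fderiv ℝ (L l) q ((0:E dy), e)) p :=
    fun p => (diffD l hl p).clm_apply (differentiableAt_const _)
  have hD' : ∀ p : E dy × E dy, DifferentiableAt ℝ (fun q => fderiv ℝ (L l) q (e, (0:E dy))) p :=
    fun p => (diffD l hl p).clm_apply (differentiableAt_const _)
  have h2 : (fun q : E dy × E dy => fderiv ℝ (L l) q ((0:E dy), e))
      = (fun p : E dy × E dy => fderiv ℝ (L l) p (e, (0:E dy))) ∘ σ := by
    funext q
    exact fderiv_swap l hl hsymm q (0, e)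
  have h3 : fderiv ℝ (fun q : E dy × E dy => fderiv ℝ (L l) q ((0:E dy), e)) (y', y)
      (e, (0:E dy)) = fderiv ℝ (fun p : E dy × E dy => fderiv ℝ (L l) p (e, (0:E dy)))
      (y, y') ((0:E dy), e) := by
    rw [h2, fderiv_comp _ (hD' _) σ.differentiableAt, σ.fderiv]
    rfl
  symm
  calc fderiv ℝ (fderiv ℝ (L l)) (y', y) (e, 0) (0, e)
      = fderiv ℝ (fun q : E dy × E dy => fderiv ℝ (L l) q ((0:E dy), e)) (y', y) (e, 0) :=
        (fderiv_clm_const l hl (y', y) (e, 0) (0, e)).symm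
    _ = fderiv ℝ (fun p : E dy × E dy => fderiv ℝ (L l) p (e, (0:E dy))) (y, y') (0, e) := h3
    _ = fderiv ℝ (fderiv ℝ (L l)) (y, y') (0, e) (e, 0) :=
        fderiv_clm_const l hl (y, y') (0, e) (e, 0)
    _ = fderiv ℝ (fderiv ℝ (L l)) (y, y') (e, 0) (0, e) :=
        second_derivative_symmetric (f := L l) (fun q => (diffL l hl q).hasFDerivAt)
          (diffD l hl (y, y')).hasFDerivAt (0, e) (e, 0)


lemma pair_snd_decomp (x : E dy) :
    ((0, x) : E dy × E dy) = ∑ i, x i • (((0 : E dy), (EuclideanSpace.single i 1 : E dy))) := by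
  refine Prod.ext ?_ ?_
  · simp [Prod.fst_sum]
  · simp only [Prod.snd_sum, Prod.smul_snd]
    simpa [EuclideanSpace.basisFun_apply, EuclideanSpace.basisFun_repr] using
      ((EuclideanSpace.basisFun (Fin dy) ℝ).sum_repr x).symm

lemma pair_fst_decomp (x : E dy) :
    ((x, 0) : E dy × E dy) = ∑ i, x i • (((EuclideanSpace.single i 1 : E dy), (0 : E dy))) := by
  refine Prod.ext ?_ ?_
  · simp only [Prod.fst_sum, Prod.smul_fst]
    simpa [EuclideanSpace.basisFun_apply, EuclideanSpace.basisFun_repr] using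
      ((EuclideanSpace.basisFun (Fin dy) ℝ).sum_repr x).symm
  · simp [Prod.snd_sum]

lemma clm_snd_decomp (T : E dy × E dy →L[ℝ] ℝ) (x : E dy) :
    T (0, x) = ∑ i, x i * T (0, EuclideanSpace.single i 1) := by
  rw [pair_snd_decomp, map_sum]
  exact Finset.sum_congr rfl fun i _ => by rw [_root_.map_smul]; rfl

lemma clm_fst_decomp (T : E dy × E dy →L[ℝ] ℝ) (x : E dy) :
    T (x, 0) = ∑ i, x i * T (EuclideanSpace.single i 1, 0) := by
  rw [pair_fst_decomp, map_sum]
  exact Finset.sum_congr rfl fun i _ => by rw [_root_.map_smul]; rfl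

lemma inner_coords (x y : E dy) : (inner ℝ x y : ℝ) = ∑ i, x i * y i := by
  simp [PiLp.inner_apply, RCLike.inner_apply, conj_trivial]
  exact Finset.sum_congr rfl fun _ _ => mul_comm _ _


lemma T_psd (hl : ContDiff ℝ 2 (L l))
    (hl_pd : ∀ (n : ℕ) (y : Fin n → E dy) (c : Fin n → ℝ),
      0 ≤ ∑ a, ∑ b, c a * c b * l (y a) (y b))
    (e : E dy) (n : ℕ) (y : Fin n → E dy) (w c : Fin n → ℝ) :
    0 ≤ ∑ a, ∑ b, c a * c b * (l (y a) (y b) * (w a * w b)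
        + w a * fderiv ℝ (L l) (y a, y b) (0, e)
        + w b * fderiv ℝ (L l) (y a, y b) (e, 0)
        + fderiv ℝ (fderiv ℝ (L l)) (y a, y b) (e, 0) (0, e)) := by
  set Q : Fin n → Fin n → ℝ → ℝ := fun a b t =>
      (w a - 1/t) * (w b - 1/t) * l (y a) (y b)
    + (w a - 1/t) * (1/t) * l (y a) (y b + t • e)
    + (1/t) * (w b - 1/t) * l (y a + t • e) (y b)
    + (1/t) * (1/t) * l (y a + t • e) (y b + t • e) with hQ
  have hpos : ∀ t : ℝ, 0 ≤ ∑ a, ∑ b, c a * c b * Q a b t := by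
    intro t
    have h0 := hl_pd (n + n) (Fin.append y (fun a => y a + t • e))
      (Fin.append (fun a => c a * (w a - 1/t)) (fun a => c a * (1/t)))
    have key : (∑ A, ∑ B,
        (Fin.append (fun a => c a * (w a - 1/t)) (fun a => c a * (1/t))) A
        * (Fin.append (fun a => c a * (w a - 1/t)) (fun a => c a * (1/t))) B
        * l ((Fin.append y fun a => y a + t • e) A) ((Fin.append y fun a => y a + t • e) B))
        = ∑ a, ∑ b, c a * c b * Q a b t := by
      rw [Fin.sum_univ_add]
      simp only [Fin.sum_univ_add, Fin.append_left, Fin.append_right]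
      rw [← Finset.sum_add_distrib]
      refine Finset.sum_congr rfl fun a _ => ?_
      rw [← Finset.sum_add_distrib, ← Finset.sum_add_distrib, ← Finset.sum_add_distrib]
      refine Finset.sum_congr rfl fun b _ => ?_
      simp only [hQ]; ring
    rw [key] at h0
    exact h0
  have hlim : Tendsto (fun t => ∑ a, ∑ b, c a * c b * Q a b t) (𝓝[>] (0:ℝ))
      (𝓝 (∑ a, ∑ b, c a * c b * (l (y a) (y b) * (w a * w b)
        + w a * fderiv ℝ (L l) (y a, y b) (0, e)
        + w b * fderiv ℝ (L l) (y a, y b) (e, 0)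
        + fderiv ℝ (fderiv ℝ (L l)) (y a, y b) (e, 0) (0, e)))) := by
    refine tendsto_finset_sum _ fun a _ => tendsto_finset_sum _ fun b _ => ?_
    refine Tendsto.const_mul _ ?_
    have hmono : (𝓝[>] (0:ℝ)) ≤ 𝓝[≠] (0:ℝ) :=
      nhdsWithin_mono (0:ℝ) (fun t (ht : t ∈ Set.Ioi (0:ℝ)) => ne_of_gt ht)
    have e1 : Tendsto (fun t : ℝ => (l (y a) (y b + t • e) - l (y a) (y b)) / t)
        (𝓝[>] (0:ℝ)) (𝓝 (fderiv ℝ (L l) (y a, y b) (0, e))) := by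
      have := (tendsto_slope_line l hl (y a) (y b) 0 e).mono_left hmono
      simpa using this
    have e2 : Tendsto (fun t : ℝ => (l (y a + t • e) (y b) - l (y a) (y b)) / t)
        (𝓝[>] (0:ℝ)) (𝓝 (fderiv ℝ (L l) (y a, y b) (e, 0))) := by
      have := (tendsto_slope_line l hl (y a) (y b) e 0).mono_left hmono
      simpa using this
    have e3 := tendsto_crossQuot l hl (y a) (y b) e
    have hsum := (((tendsto_const_nhds (x := l (y a) (y b) * (w a * w b))
        (f := 𝓝[>] (0:ℝ))).add (e1.const_mul (w a))).add (e2.const_mul (w b))).add e3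
    refine Tendsto.congr' ?_ hsum
    filter_upwards [self_mem_nhdsWithin] with t (ht : t ∈ Set.Ioi (0:ℝ))
    have ht' : t ≠ 0 := ne_of_gt ht
    simp only [hQ]
    field_simp
    ring
  exact ge_of_tendsto' hlim hpos

end SteinAux

/-- For conditional models `Q_{|z}` with C¹ strictly positive
densities `f_{Q_{|z}}` and scores `s_{Q_{|z}} = ∇_y log f_{Q_{|z}}`, a C² positive
definite real kernel `l` on `𝒴` and a positive definite real kernel `k` on `𝒵`,
the conditional Stein kernel
`k_Q((z,y),(z',y')) = k(z,z')·[l(y,y') s_z(y)ᵀs_{z'}(y') + s_z(y)ᵀ∇_{y'}l + s_{z'}(y')ᵀ∇_y l + ∑ᵢ ∂²l/∂yᵢ∂y'ᵢ]`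
is a positive definite kernel on `𝒵 × 𝒴`. -/
theorem stmt_11 {dy : ℕ} {𝒵 : Type*}
    (k : 𝒵 → 𝒵 → ℝ) (hk_symm : ∀ z z', k z z' = k z' z)
    (hk_pd : ∀ (n : ℕ) (z : Fin n → 𝒵) (c : Fin n → ℝ),
      0 ≤ ∑ i, ∑ j, c i * c j * k (z i) (z j))
    (l : EuclideanSpace ℝ (Fin dy) → EuclideanSpace ℝ (Fin dy) → ℝ)
    (hl_smooth : ContDiff ℝ 2
      (fun p : EuclideanSpace ℝ (Fin dy) × EuclideanSpace ℝ (Fin dy) => l p.1 p.2))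
    (hl_symm : ∀ y y', l y y' = l y' y)
    (hl_pd : ∀ (n : ℕ) (y : Fin n → EuclideanSpace ℝ (Fin dy)) (c : Fin n → ℝ),
      0 ≤ ∑ i, ∑ j, c i * c j * l (y i) (y j))
    (f : 𝒵 → EuclideanSpace ℝ (Fin dy) → ℝ)
    (hf_pos : ∀ z y, 0 < f z y) (hf_diff : ∀ z, ContDiff ℝ 1 (f z))
    (s : 𝒵 → EuclideanSpace ℝ (Fin dy) → EuclideanSpace ℝ (Fin dy))
    (hs : ∀ z y, HasGradientAt (fun u => Real.log (f z u)) (s z y) y)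
    (kQ : 𝒵 × EuclideanSpace ℝ (Fin dy) → 𝒵 × EuclideanSpace ℝ (Fin dy) → ℝ)
    (hkQ : ∀ z y z' y', kQ (z, y) (z', y') =
      k z z' * (l y y' * inner ℝ (s z y) (s z' y')
        + inner ℝ (s z y) (gradSnd l y y')
        + inner ℝ (s z' y') (gradFst l y y')
        + crossDeriv l y y')) :
    (∀ u v, kQ u v = kQ v u) ∧
    (∀ (n : ℕ) (u : Fin n → 𝒵 × EuclideanSpace ℝ (Fin dy)) (c : Fin n → ℝ),
      0 ≤ ∑ i, ∑ j, c i * c j * kQ (u i) (u j)) := by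
  classical
  have hl2 : ContDiff ℝ 2 (SteinAux.L l) := hl_smooth
  have hgrad : ∀ y y' : EuclideanSpace ℝ (Fin dy), gradSnd l y y' = gradFst l y' y := by
    intro y y'
    unfold gradSnd gradFst
    congr 1
    funext v
    exact hl_symm y v
  have hcross : ∀ y y', crossDeriv l y y' = crossDeriv l y' y :=
    fun y y' => SteinAux.crossDeriv_symm l hl2 hl_symm y y'
  constructor
  · rintro ⟨z, y⟩ ⟨z', y'⟩
    rw [hkQ, hkQ, hk_symm z z', hl_symm y y', real_inner_comm (s z y) (s z' y'),
      hcross y y', hgrad y y', (hgrad y' y).symm]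
    ring
  · intro n u c
    set yv : Fin n → EuclideanSpace ℝ (Fin dy) := fun a => (u a).2 with hyv
    set zv : Fin n → 𝒵 := fun a => (u a).1 with hzv
    set sv : Fin n → EuclideanSpace ℝ (Fin dy) := fun a => s (zv a) (yv a) with hsv
    set S : Fin n → Fin n → ℝ := fun a b =>
      l (yv a) (yv b) * inner ℝ (sv a) (sv b) + inner ℝ (sv a) (gradSnd l (yv a) (yv b))
      + inner ℝ (sv b) (gradFst l (yv a) (yv b)) + crossDeriv l (yv a) (yv b) with hS
    have hku : ∀ a b, kQ (u a) (u b) = k (zv a) (zv b) * S a b := fun a b =>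
      hkQ (u a).1 (u a).2 (u b).1 (u b).2
    have hSsum : ∀ a b, S a b = ∑ i, (l (yv a) (yv b) * (sv a i * sv b i)
        + sv a i * fderiv ℝ (SteinAux.L l) (yv a, yv b) (0, EuclideanSpace.single i 1)
        + sv b i * fderiv ℝ (SteinAux.L l) (yv a, yv b) (EuclideanSpace.single i 1, 0)
        + fderiv ℝ (fderiv ℝ (SteinAux.L l)) (yv a, yv b) (EuclideanSpace.single i 1, 0)
            (0, EuclideanSpace.single i 1)) := by
      intro a b
      have t1 : l (yv a) (yv b) * (inner ℝ (sv a) (sv b) : ℝ)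
          = ∑ i, l (yv a) (yv b) * (sv a i * sv b i) := by
        rw [SteinAux.inner_coords, Finset.mul_sum]
      have t2 : (inner ℝ (sv a) (gradSnd l (yv a) (yv b)) : ℝ)
          = ∑ i, sv a i * fderiv ℝ (SteinAux.L l) (yv a, yv b)
              (0, EuclideanSpace.single i 1) := by
        rw [SteinAux.inner_gradSnd l hl2]
        exact SteinAux.clm_snd_decomp _ (sv a)
      have t3 : (inner ℝ (sv b) (gradFst l (yv a) (yv b)) : ℝ)
          = ∑ i, sv b i * fderiv ℝ (SteinAux.L l) (yv a, yv b)
              (EuclideanSpace.single i 1, 0) := by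
        rw [SteinAux.inner_gradFst l hl2]
        exact SteinAux.clm_fst_decomp _ (sv b)
      have t4 := SteinAux.crossDeriv_eq l hl2 (yv a) (yv b)
      simp only [hS]
      rw [t1, t2, t3, t4, ← Finset.sum_add_distrib, ← Finset.sum_add_distrib,
        ← Finset.sum_add_distrib]
    have hS_psd : ∀ x : Fin n → ℝ, 0 ≤ ∑ a, ∑ b, x a * x b * S a b := by
      intro x
      have h0 : 0 ≤ ∑ i : Fin dy, ∑ a, ∑ b, x a * x b *
          (l (yv a) (yv b) * (sv a i * sv b i)
          + sv a i * fderiv ℝ (SteinAux.L l) (yv a, yv b) (0, EuclideanSpace.single i 1)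
          + sv b i * fderiv ℝ (SteinAux.L l) (yv a, yv b) (EuclideanSpace.single i 1, 0)
          + fderiv ℝ (fderiv ℝ (SteinAux.L l)) (yv a, yv b) (EuclideanSpace.single i 1, 0)
              (0, EuclideanSpace.single i 1)) :=
        Finset.sum_nonneg fun i _ =>
          SteinAux.T_psd l hl2 hl_pd (EuclideanSpace.single i 1) n yv (fun a => sv a i) x
      refine le_trans h0 (le_of_eq ?_)
      rw [Finset.sum_comm]
      refine Finset.sum_congr rfl fun a _ => ?_
      rw [Finset.sum_comm]
      refine Finset.sum_congr rfl fun b _ => ?_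
      rw [hSsum a b, Finset.mul_sum]
    have hS_symm : ∀ a b, S a b = S b a := by
      intro a b
      simp only [hS]
      rw [hl_symm (yv a) (yv b), real_inner_comm (sv a) (sv b), hcross (yv a) (yv b),
        hgrad (yv a) (yv b), (hgrad (yv b) (yv a)).symm]
      ring
    set M : Matrix (Fin n) (Fin n) ℝ := Matrix.of S with hM
    have hMpsd : M.PosSemidef := by
      refine Matrix.PosSemidef.of_dotProduct_mulVec_nonneg ?_ ?_
      · ext a b
        simp only [Matrix.conjTranspose_apply, hM, Matrix.of_apply, star_trivial]
        exact (hS_symm a b).symm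
      · intro x
        have h := hS_psd x
        have heq : dotProduct (star x) (M.mulVec x) = ∑ a, ∑ b, x a * x b * S a b := by
          simp only [dotProduct, Matrix.mulVec, dotProduct, Pi.star_apply,
            star_trivial, hM, Matrix.of_apply, Finset.mul_sum]
          exact Finset.sum_congr rfl fun a _ => Finset.sum_congr rfl fun b _ => by ring
        rw [heq]
        exact h
    obtain ⟨B, hB⟩ : ∃ B : Matrix (Fin n) (Fin n) ℝ, M = B.conjTranspose * B := by
      open scoped MatrixOrder in
      obtain ⟨X, hX, -, hXX⟩ := CFC.exists_sqrt_of_isSelfAdjoint_of_quasispectrumRestricts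
        hMpsd.isHermitian (QuasispectrumRestricts.nnreal_of_nonneg hMpsd.nonneg)
      exact ⟨X, by rw [← Matrix.star_eq_conjTranspose, hX.star_eq]; exact hXX.symm⟩
    have hSentry : ∀ a b, S a b = ∑ r, B r a * B r b := by
      intro a b
      have h1 : M a b = (B.conjTranspose * B) a b := by rw [← hB]
      simpa [Matrix.mul_apply, Matrix.conjTranspose_apply, hM] using h1
    calc (0:ℝ) ≤ ∑ r : Fin n, ∑ a, ∑ b, (c a * B r a) * (c b * B r b) * k (zv a) (zv b) :=
        Finset.sum_nonneg fun r _ => hk_pd n zv (fun a => c a * B r a)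
      _ = ∑ a, ∑ b, c a * c b * kQ (u a) (u b) := by
        rw [Finset.sum_comm]
        refine Finset.sum_congr rfl fun a _ => ?_
        rw [Finset.sum_comm]
        refine Finset.sum_congr rfl fun b _ => ?_
        rw [hku a b, hSentry a b, Finset.mul_sum, Finset.mul_sum]
        exact Finset.sum_congr rfl fun r _ => by ring

end
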